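/- Let λ_{k,j} = (1 − 1/k) exp(2πij/k) and K̂_{λ} = (1 − |λ|²)^{1/2} K_λ the normalized Szegő kernels. Then there exist constants 0 < A ≤ B < ∞ such that for all g ∈ H²(𝔻): A‖g‖_{H²} ≤ sup_{k∈ℕ} ( Σ_{j=0}^{k−1} |⟨K̂_{λ_{k,j}}, g⟩|² )^{1/2} ≤ B‖g‖_{H²}. -/

import Mathlib

open Complex

/-- The point `λ_{k,j} = (1 - 1/(k+1)) exp(2πij/(k+1))`. -/
noncomputable def lamPoint (k : ℕ) (j : Fin (k + 1)) : ℂ :=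
  ((1 - 1 / ((k : ℝ) + 1)) : ℂ) *
    Complex.exp (2 * (Real.pi : ℂ) * Complex.I * ((j : ℕ) : ℂ) / (((k : ℕ) : ℂ) + 1))

lemma tsum_cs {a b : ℕ → ℝ} (ha : ∀ t, 0 ≤ a t) (hb : ∀ t, 0 ≤ b t)
    (hA : Summable fun t => a t ^ 2) (hB : Summable fun t => b t ^ 2) :
    (∑' t, a t * b t) ≤ Real.sqrt (∑' t, a t ^ 2) * Real.sqrt (∑' t, b t ^ 2) := by
  have hsum : Summable fun t => a t * b t := by
    apply Summable.of_nonneg_of_le (fun t => mul_nonneg (ha t) (hb t))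
      (fun t => ?_) (hA.add hB)
    nlinarith [sq_nonneg (a t - b t), mul_nonneg (ha t) (hb t)]
  apply Summable.tsum_le_of_sum_le hsum
  intro s
  have h1 : (∑ i ∈ s, a i * b i) ^ 2 ≤ (∑ i ∈ s, a i ^ 2) * ∑ i ∈ s, b i ^ 2 :=
    Finset.sum_mul_sq_le_sq_mul_sq s a b
  have h2 : (∑ i ∈ s, a i ^ 2) ≤ ∑' t, a t ^ 2 :=
    Summable.sum_le_tsum s (fun i _ => sq_nonneg _) hA
  have h3 : (∑ i ∈ s, b i ^ 2) ≤ ∑' t, b t ^ 2 :=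
    Summable.sum_le_tsum s (fun i _ => sq_nonneg _) hB
  have hnn : (0:ℝ) ≤ ∑ i ∈ s, a i * b i :=
    Finset.sum_nonneg fun i _ => mul_nonneg (ha i) (hb i)
  calc (∑ i ∈ s, a i * b i) = Real.sqrt ((∑ i ∈ s, a i * b i)^2) := by
        rw [Real.sqrt_sq hnn]
    _ ≤ Real.sqrt ((∑' t, a t ^ 2) * (∑' t, b t ^ 2)) := by
        apply Real.sqrt_le_sqrt
        calc (∑ i ∈ s, a i * b i)^2 ≤ (∑ i ∈ s, a i ^ 2) * ∑ i ∈ s, b i ^ 2 := h1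
          _ ≤ (∑' t, a t ^ 2) * (∑' t, b t ^ 2) := by
              apply mul_le_mul h2 h3 (Finset.sum_nonneg fun i _ => sq_nonneg _)
              exact tsum_nonneg fun t => sq_nonneg _
    _ = Real.sqrt (∑' t, a t ^ 2) * Real.sqrt (∑' t, b t ^ 2) :=
        Real.sqrt_mul (tsum_nonneg fun t => sq_nonneg _) _

noncomputable def zet (N : ℕ) : ℂ := Complex.exp (2 * Real.pi * I / N)

lemma zet_pow_N (N : ℕ) (hN : 0 < N) : zet N ^ N = 1 := by
  rw [zet, ← Complex.exp_nat_mul]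
  have hN' : (N:ℂ) ≠ 0 := Nat.cast_ne_zero.mpr hN.ne'
  rw [show (N:ℂ) * (2 * Real.pi * I / N) = 2 * Real.pi * I by field_simp]
  exact Complex.exp_two_pi_mul_I

lemma sum_pow_eq_zero {N : ℕ} (hN : 0 < N) {u : ℂ} (hu : u ^ N = 1) (h1 : u ≠ 1) :
    ∑ j : Fin N, u ^ (j:ℕ) = 0 := by
  rw [Fin.sum_univ_eq_sum_range (fun j => u ^ j), geom_sum_eq h1, hu]
  simp

lemma zet_orth {N : ℕ} (hN : 0 < N) (d e : Fin N) :
    ∑ j : Fin N, zet N ^ ((j:ℕ) * (d:ℕ)) * (starRingEnd ℂ) (zet N ^ ((j:ℕ) * (e:ℕ)))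
      = if d = e then (N:ℂ) else 0 := by
  have key : ∀ j : Fin N, zet N ^ ((j:ℕ) * (d:ℕ)) * (starRingEnd ℂ) (zet N ^ ((j:ℕ) * (e:ℕ)))
      = (zet N ^ (d:ℕ) * (starRingEnd ℂ) (zet N ^ (e:ℕ))) ^ (j:ℕ) := by
    intro j
    rw [mul_pow, ← pow_mul, ← map_pow, ← pow_mul]
    ring_nf
  rw [Finset.sum_congr rfl (fun j _ => key j)]
  by_cases hde : d = e
  · subst hde
    have habs : ‖zet N ^ (d:ℕ)‖ = 1 := by
      rw [norm_pow, zet, show 2 * (Real.pi:ℂ) * I / N = ((2 * Real.pi / N : ℝ):ℂ) * I by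
        push_cast; ring, Complex.norm_exp_ofReal_mul_I, one_pow]
    have h1 : zet N ^ (d:ℕ) * (starRingEnd ℂ) (zet N ^ (d:ℕ)) = 1 := by
      rw [Complex.mul_conj, Complex.normSq_eq_norm_sq, habs]; norm_num
    rw [if_pos rfl, Finset.sum_congr rfl (fun x _ => by rw [h1, one_pow])]
    simp
  · rw [if_neg hde]
    apply sum_pow_eq_zero hN
    · rw [mul_pow, ← pow_mul, ← map_pow, ← pow_mul, mul_comm (d:ℕ) N, mul_comm (e:ℕ) N,
        pow_mul, pow_mul, zet_pow_N N hN, one_pow, one_pow, map_one, mul_one]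
    · intro hcon
      have hNC : (N:ℂ) ≠ 0 := Nat.cast_ne_zero.mpr hN.ne'
      have hexp : zet N ^ (d:ℕ) * (starRingEnd ℂ) (zet N ^ (e:ℕ))
          = Complex.exp ((((d:ℕ):ℂ) - ((e:ℕ):ℂ)) * (2 * Real.pi * I / N)) := by
        rw [zet, ← Complex.exp_nat_mul, ← Complex.exp_nat_mul, ← Complex.exp_conj,
          ← Complex.exp_add]
        congr 1
        rw [map_mul, map_div₀, map_mul, map_mul, Complex.conj_I]
        simp [Complex.conj_ofReal, map_ofNat]
        ring
      rw [hexp, Complex.exp_eq_one_iff] at hcon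
      obtain ⟨n, hn⟩ := hcon
      have h2pi : (2 * (Real.pi:ℂ) * I) ≠ 0 := by
        simp [Complex.I_ne_zero, Real.pi_ne_zero]
      have : (((d:ℕ):ℂ) - ((e:ℕ):ℂ)) = n * N := by
        field_simp at hn
        apply mul_right_cancel₀ h2pi
        rw [hn]; ring
      have hz : ((d:ℕ):ℤ) - ((e:ℕ):ℤ) = n * N := by exact_mod_cast this
      have hd := d.isLt; have he := e.isLt
      have hne : ((d:ℕ):ℤ) ≠ ((e:ℕ):ℤ) := by
        simpa [Fin.ext_iff] using fun h => hde (Fin.ext (by exact_mod_cast h))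
      rcases lt_trichotomy n 0 with h | h | h
      · nlinarith [hz, h]
      · subst h; simp at hz; omega
      · nlinarith [hz, h]
lemma parseval {N : ℕ} (hN : 0 < N) (S : Fin N → ℂ)
    (horth : ∀ d e : Fin N,
      ∑ j : Fin N, zet N ^ ((j:ℕ) * (d:ℕ)) * (starRingEnd ℂ) (zet N ^ ((j:ℕ) * (e:ℕ)))
      = if d = e then (N:ℂ) else 0) :
    ∑ j : Fin N, ‖∑ d : Fin N, zet N ^ ((j:ℕ)*(d:ℕ)) * S d‖ ^ 2
      = N * ∑ d : Fin N, ‖S d‖ ^ 2 := by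
  have hre : ∀ w : ℂ, ‖w‖ ^ 2 = (w * (starRingEnd ℂ) w).re := by
    intro w
    rw [Complex.mul_conj, Complex.normSq_eq_norm_sq, Complex.ofReal_re]
  have main : ∑ j : Fin N, (∑ d : Fin N, zet N ^ ((j:ℕ)*(d:ℕ)) * S d) *
      (starRingEnd ℂ) (∑ e : Fin N, zet N ^ ((j:ℕ)*(e:ℕ)) * S e)
      = (((N : ℝ) * ∑ d : Fin N, ‖S d‖ ^ 2 : ℝ) : ℂ) := by
    have step1 : ∀ j : Fin N, (∑ d : Fin N, zet N ^ ((j:ℕ)*(d:ℕ)) * S d) *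
        (starRingEnd ℂ) (∑ e : Fin N, zet N ^ ((j:ℕ)*(e:ℕ)) * S e)
        = ∑ d : Fin N, ∑ e : Fin N,
            (zet N ^ ((j:ℕ)*(d:ℕ)) * (starRingEnd ℂ) (zet N ^ ((j:ℕ)*(e:ℕ))))
              * (S d * (starRingEnd ℂ) (S e)) := by
      intro j
      rw [map_sum, Finset.sum_mul_sum]
      refine Finset.sum_congr rfl fun d _ => Finset.sum_congr rfl fun e _ => ?_
      rw [map_mul]; ring
    rw [Finset.sum_congr rfl fun j _ => step1 j]
    rw [Finset.sum_comm]
    have step2 : ∀ d : Fin N, ∑ j : Fin N, ∑ e : Fin N,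
        (zet N ^ ((j:ℕ)*(d:ℕ)) * (starRingEnd ℂ) (zet N ^ ((j:ℕ)*(e:ℕ))))
          * (S d * (starRingEnd ℂ) (S e))
        = (N:ℂ) * (S d * (starRingEnd ℂ) (S d)) := by
      intro d
      rw [Finset.sum_comm]
      have : ∀ e : Fin N, ∑ j : Fin N,
          (zet N ^ ((j:ℕ)*(d:ℕ)) * (starRingEnd ℂ) (zet N ^ ((j:ℕ)*(e:ℕ))))
            * (S d * (starRingEnd ℂ) (S e))
          = (if d = e then (N:ℂ) else 0) * (S d * (starRingEnd ℂ) (S e)) := by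
        intro e
        rw [← Finset.sum_mul, horth d e]
      rw [Finset.sum_congr rfl fun e _ => this e]
      simp
    rw [Finset.sum_congr rfl fun d _ => step2 d, ← Finset.mul_sum]
    push_cast
    congr 1
    refine Finset.sum_congr rfl fun d _ => ?_
    rw [Complex.mul_conj, Complex.normSq_eq_norm_sq]
    norm_cast
  have := congrArg Complex.re main
  rw [Complex.re_sum] at this
  rw [Finset.sum_congr rfl fun j _ => hre _, this]
  norm_cast

lemma lamPoint_eq (k : ℕ) (j : Fin (k+1)) :
    lamPoint k j = (((1 - 1/((k:ℝ)+1)):ℝ) : ℂ) * zet (k+1) ^ (j:ℕ) := by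
  have hne : ((k:ℂ)+1) ≠ 0 := by
    have h1 : (((k+1:ℕ)):ℂ) ≠ 0 := Nat.cast_ne_zero.mpr (Nat.succ_ne_zero k)
    push_cast at h1; exact h1
  have hcast : (((k+1:ℕ)):ℂ) = (k:ℂ)+1 := by push_cast; ring
  rw [lamPoint, zet, ← Complex.exp_nat_mul, hcast]
  congr 1
  · push_cast; ring
  · congr 1; ring

lemma norm_lamPoint (k : ℕ) (j : Fin (k+1)) : ‖lamPoint k j‖ = 1 - 1/((k:ℝ)+1) := by
  have hk : (0:ℝ) < (k:ℝ) + 1 := by positivity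
  rw [lamPoint_eq, norm_mul, norm_pow]
  have h1 : ‖zet (k+1)‖ = 1 := by
    rw [zet, show 2*(Real.pi:ℂ)*I/(((k+1:ℕ)):ℂ) = ((2*Real.pi/((k:ℝ)+1) :ℝ):ℂ)*I by
      push_cast; ring]
    exact Complex.norm_exp_ofReal_mul_I _
  rw [h1, one_pow, mul_one, Complex.norm_real, Real.norm_eq_abs]
  have h2 : 1/((k:ℝ)+1) ≤ 1 := by
    rw [div_le_one hk]; linarith
  rw [_root_.abs_of_nonneg (by linarith : (0:ℝ) ≤ 1 - 1/((k:ℝ)+1))]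


lemma mulN_inj {N : ℕ} (hN : 0 < N) (d : ℕ) : Function.Injective fun t : ℕ => t * N + d := by
  intro a b h
  simp only [add_left_inj] at h
  exact Nat.eq_of_mul_eq_mul_right hN h

lemma summable_shift (c : ℕ → ℂ) (hc : Summable fun n => ‖c n‖^2) {r : ℝ} (h0 : 0 ≤ r)
    (h1 : r < 1) (N d : ℕ) (hN : 0 < N) :
    Summable fun t : ℕ => ‖c (t*N + d) * (r:ℂ)^(t*N + d)‖ := by
  apply Summable.of_nonneg_of_le (fun t => norm_nonneg _) (fun t => ?_)
    ((summable_geometric_of_lt_one h0 h1).add (hc.comp_injective (mulN_inj hN d)))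
  have hm : ∀ m : ℕ, ‖c m * (r:ℂ)^m‖ = ‖c m‖ * r^m := by
    intro m
    rw [norm_mul, norm_pow, Complex.norm_real, Real.norm_eq_abs, _root_.abs_of_nonneg h0]
  rw [hm]
  have hle : t ≤ t*N + d := by nlinarith
  have hp1 : r^(t*N+d) ≤ 1 := pow_le_one₀ h0 h1.le
  have hpq : r^(t*N+d) ≤ r^t := pow_le_pow_of_le_one h0 h1.le hle
  have hp0 : (0:ℝ) ≤ r^(t*N+d) := pow_nonneg h0 _
  have hx : ‖c (t*N+d)‖ ≤ 1 + ‖c (t*N+d)‖^2 := by nlinarith [sq_nonneg (‖c (t*N+d)‖ - 1)]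
  show ‖c (t*N+d)‖ * r^(t*N+d) ≤ r^t + ‖c (t*N+d)‖^2
  nlinarith [mul_le_mul_of_nonneg_right hx hp0, norm_nonneg (c (t*N+d)),
    mul_le_mul_of_nonneg_left hp1 (sq_nonneg ‖c (t*N+d)‖)]

noncomputable def Sd (c : ℕ → ℂ) (r : ℝ) (N d : ℕ) : ℂ :=
  ∑' t : ℕ, c (t*N + d) * (r:ℂ)^(t*N + d)

lemma g_rep (c : ℕ → ℂ) (hc : Summable fun n => ‖c n‖^2) {r : ℝ} (h0 : 0 ≤ r) (h1 : r < 1)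
    {N : ℕ} (hN : 0 < N) {j : Fin N} {w : ℂ}
    (hg : HasSum (fun n => zet N ^ ((j:ℕ) * n) * (c n * (r:ℂ)^n)) w) :
    w = ∑ d : Fin N, zet N ^ ((j:ℕ) * (d:ℕ)) * Sd c r N d := by
  haveI : NeZero N := ⟨hN.ne'⟩
  set F : ℕ → ℂ := fun n => zet N ^ ((j:ℕ) * n) * (c n * (r:ℂ)^n) with hF
  let e : Fin N × ℕ ≃ ℕ := (Equiv.prodComm (Fin N) ℕ).trans (Nat.divModEquiv N).symm
  have he : HasSum (F ∘ e) w := (Equiv.hasSum_iff e).mpr hg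
  have hfib : ∀ d : Fin N, HasSum (fun t => (F ∘ e) (d, t))
      (zet N ^ ((j:ℕ) * (d:ℕ)) * Sd c r N (d:ℕ)) := by
    intro d
    have hS : HasSum (fun t => c (t*N + (d:ℕ)) * (r:ℂ)^(t*N + (d:ℕ))) (Sd c r N (d:ℕ)) :=
      ((summable_shift c hc h0 h1 N d hN).of_norm).hasSum
    have hmul := hS.mul_left (zet N ^ ((j:ℕ) * (d:ℕ)))
    have heq : (fun t => (F ∘ e) (d, t))
        = fun t => zet N ^ ((j:ℕ)*(d:ℕ)) * (c (t*N + (d:ℕ)) * (r:ℂ)^(t*N + (d:ℕ))) := by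
      funext t
      show F (t * N + (d:ℕ)) = _
      simp only [hF]
      have harith : (j:ℕ) * (t*N + (d:ℕ)) = N * ((j:ℕ)*t) + (j:ℕ)*(d:ℕ) := by ring
      rw [harith, pow_add, pow_mul, zet_pow_N N hN, one_pow, one_mul]
    rw [heq]
    exact hmul
  exact (he.prod_fiberwise hfib).unique (hasSum_fintype _)

lemma csq_rep (c : ℕ → ℂ) (hc : Summable fun n => ‖c n‖^2) {N : ℕ} (hN : 0 < N) :
    (∑' n, ‖c n‖^2) = ∑ d : Fin N, ∑' t : ℕ, ‖c (t*N + (d:ℕ))‖^2 := by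
  haveI : NeZero N := ⟨hN.ne'⟩
  set F : ℕ → ℝ := fun n => ‖c n‖^2 with hF
  let e : Fin N × ℕ ≃ ℕ := (Equiv.prodComm (Fin N) ℕ).trans (Nat.divModEquiv N).symm
  have he : HasSum (F ∘ e) (∑' n, ‖c n‖^2) := (Equiv.hasSum_iff e).mpr hc.hasSum
  have hfib : ∀ d : Fin N, HasSum (fun t => (F ∘ e) (d, t))
      (∑' t : ℕ, ‖c (t*N + (d:ℕ))‖^2) := by
    intro d
    exact (hc.comp_injective (mulN_inj hN (d:ℕ))).hasSum
  exact (he.prod_fiberwise hfib).unique (hasSum_fintype _)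


noncomputable def rk (k : ℕ) : ℝ := 1 - 1/((k:ℝ)+1)

lemma rk_nonneg (k : ℕ) : 0 ≤ rk k := by
  have hk : (0:ℝ) < (k:ℝ) + 1 := by positivity
  rw [rk, sub_nonneg, div_le_one hk]; linarith

lemma rk_lt_one (k : ℕ) : rk k < 1 := by
  have h : 0 < 1/((k:ℝ)+1) := by positivity
  rw [rk]; linarith

lemma rk_pow_le (k : ℕ) : (rk k)^(k+1) ≤ Real.exp (-1) := by
  have hk : (0:ℝ) < (k:ℝ) + 1 := by positivity
  have step : rk k ≤ Real.exp (-(1/((k:ℝ)+1))) := by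
    have := Real.add_one_le_exp (-(1/((k:ℝ)+1)))
    simp only [rk]; linarith
  calc (rk k)^(k+1) ≤ (Real.exp (-(1/((k:ℝ)+1))))^(k+1) :=
        pow_le_pow_left₀ (rk_nonneg k) step _
    _ = Real.exp (((k+1:ℕ):ℝ) * (-(1/((k:ℝ)+1)))) := by rw [← Real.exp_nat_mul]
    _ = Real.exp (-1) := by
        congr 1
        push_cast
        field_simp

lemma exp_neg_one_le_half : Real.exp (-1) ≤ 1/2 := by
  rw [Real.exp_neg]
  have h := Real.exp_one_gt_d9
  have hpos := Real.exp_pos 1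
  rw [inv_le_comm₀ hpos (by norm_num)]
  linarith

lemma Sd_norm_sq_le (c : ℕ → ℂ) (hc : Summable fun n => ‖c n‖^2) {r : ℝ} (h0 : 0 ≤ r)
    (h1 : r < 1) {N : ℕ} (hN : 0 < N) (d : ℕ) :
    ‖Sd c r N d‖^2 ≤ (1 - r^N)⁻¹ * ∑' t : ℕ, ‖c (t*N+d)‖^2 * (r^(2*d) * (r^N)^t) := by
  set q : ℝ := r^N with hq
  have hq0 : 0 ≤ q := pow_nonneg h0 N
  have hq1 : q < 1 := pow_lt_one₀ h0 h1 hN.ne'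
  set s : ℝ := Real.sqrt q with hs
  have hs0 : 0 ≤ s := Real.sqrt_nonneg q
  have hs2 : s^2 = q := Real.sq_sqrt hq0
  have hss : s * s = q := by nlinarith
  set a : ℕ → ℝ := fun t => s^t with ha
  set b : ℕ → ℝ := fun t => ‖c (t*N+d)‖ * (r^d * s^t) with hb
  have hrpow : ∀ t : ℕ, r^(t*N+d) = r^d * q^t := by
    intro t
    rw [hq, pow_add, mul_comm t N, pow_mul, mul_comm]
  have hab : ∀ t, a t * b t = ‖c (t*N+d) * (r:ℂ)^(t*N+d)‖ := by
    intro t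
    rw [norm_mul, norm_pow, Complex.norm_real, Real.norm_eq_abs, _root_.abs_of_nonneg h0]
    simp only [ha, hb]
    rw [hrpow t, ← hss, mul_pow]
    ring
  have ha2 : ∀ t, a t ^ 2 = q^t := by
    intro t
    simp only [ha]
    rw [← pow_mul, mul_comm, pow_mul, hs2]
  have hb2 : ∀ t, b t ^ 2 = ‖c (t*N+d)‖^2 * (r^(2*d) * q^t) := by
    intro t
    simp only [hb]
    have h1' : (r^d)^2 = r^(2*d) := by rw [← pow_mul, mul_comm]
    have h2' : (s^t)^2 = q^t := by rw [← pow_mul, mul_comm, pow_mul, hs2]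
    rw [mul_pow, mul_pow, h1', h2']
  have hA : Summable fun t => a t ^ 2 := by
    simp only [ha2]
    exact summable_geometric_of_lt_one hq0 hq1
  have hwle : ∀ t : ℕ, r^(2*d) * q^t ≤ 1 :=
    fun t => mul_le_one₀ (pow_le_one₀ h0 h1.le) (pow_nonneg hq0 t) (pow_le_one₀ hq0 hq1.le)
  have hB : Summable fun t => b t ^ 2 := by
    simp only [hb2]
    apply Summable.of_nonneg_of_le (fun t => by positivity) (fun t => ?_)
      (hc.comp_injective (mulN_inj hN d))
    exact mul_le_of_le_one_right (sq_nonneg _) (hwle t)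
  have hAval : (∑' t, a t ^ 2) = (1 - q)⁻¹ := by
    rw [tsum_congr ha2, tsum_geometric_of_lt_one hq0 hq1]
  have hBval : (∑' t, b t ^ 2) = ∑' t : ℕ, ‖c (t*N+d)‖^2 * (r^(2*d) * q^t) :=
    tsum_congr hb2
  have hnorm : ‖Sd c r N d‖ ≤ ∑' t, a t * b t := by
    rw [tsum_congr hab]
    exact norm_tsum_le_tsum_norm (summable_shift c hc h0 h1 N d hN)
  have hcs := tsum_cs (a := a) (b := b) (fun t => pow_nonneg hs0 t)
    (fun t => mul_nonneg (norm_nonneg _) (by positivity)) hA hB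
  have hfin : ‖Sd c r N d‖ ≤ Real.sqrt (∑' t, a t ^ 2) * Real.sqrt (∑' t, b t ^ 2) :=
    le_trans hnorm hcs
  have hsq := pow_le_pow_left₀ (norm_nonneg _) hfin 2
  calc ‖Sd c r N d‖^2 ≤ (Real.sqrt (∑' t, a t ^ 2) * Real.sqrt (∑' t, b t ^ 2))^2 := hsq
    _ = (∑' t, a t ^ 2) * (∑' t, b t ^ 2) := by
        rw [mul_pow, Real.sq_sqrt (tsum_nonneg fun t => sq_nonneg _),
          Real.sq_sqrt (tsum_nonneg fun t => sq_nonneg _)]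
    _ = (1 - q)⁻¹ * ∑' t : ℕ, ‖c (t*N+d)‖^2 * (r^(2*d) * q^t) := by rw [hAval, hBval]

lemma norm_lamPoint' (k : ℕ) (j : Fin (k+1)) : ‖lamPoint k j‖ = rk k := by
  rw [rk]; exact norm_lamPoint k j

lemma summable_weighted (c : ℕ → ℂ) (hc : Summable fun n => ‖c n‖^2) {r : ℝ} (h0 : 0 ≤ r)
    (h1 : r < 1) {N : ℕ} (hN : 0 < N) (d e : ℕ) :
    Summable fun t : ℕ => ‖c (t*N+d)‖^2 * (r^(2*e) * (r^N)^t) := by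
  apply Summable.of_nonneg_of_le (fun t => by positivity) (fun t => ?_)
    (hc.comp_injective (mulN_inj hN d))
  have hq0 : 0 ≤ r^N := pow_nonneg h0 N
  exact mul_le_of_le_one_right (sq_nonneg _)
    (mul_le_one₀ (pow_le_one₀ h0 h1.le) (pow_nonneg hq0 t) (pow_le_one₀ hq0 (pow_le_one₀ h0 h1.le)))

lemma Sd_split (c : ℕ → ℂ) (hc : Summable fun n => ‖c n‖^2) {r : ℝ} (h0 : 0 ≤ r) (h1 : r < 1)
    {N : ℕ} (hN : 0 < N) (d : ℕ) :
    Sd c r N d = c d * (r:ℂ)^d + Sd c r N (N+d) := by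
  have hsum := (summable_shift c hc h0 h1 N d hN).of_norm
  rw [Sd, hsum.tsum_eq_zero_add]
  congr 1
  · norm_num
  · rw [Sd]
    apply tsum_congr
    intro t
    have he : (t+1)*N + d = t*N + (N+d) := by ring
    rw [he]

lemma tail_le (c : ℕ → ℂ) (hc : Summable fun n => ‖c n‖^2) {N : ℕ} (hN : 0 < N) (d : ℕ) :
    (∑' t : ℕ, ‖c (t*N + (N+d))‖^2) ≤ ∑' t : ℕ, ‖c (t*N + d)‖^2 := by
  have h1 : Summable fun t : ℕ => ‖c (t*N+d)‖^2 := hc.comp_injective (mulN_inj hN d)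
  rw [h1.tsum_eq_zero_add]
  have he : (∑' t : ℕ, ‖c (t*N + (N+d))‖^2) = ∑' t : ℕ, ‖c ((t+1)*N + d)‖^2 := by
    apply tsum_congr
    intro t
    have : t*N + (N+d) = (t+1)*N + d := by ring
    rw [this]
  rw [he]
  have h0' : 0 ≤ ‖c (0*N+d)‖^2 := sq_nonneg _
  linarith

lemma key_identity (c : ℕ → ℂ) (hc : Summable fun n => ‖c n‖^2) (g : ℂ → ℂ)
    (hg : ∀ z : ℂ, ‖z‖ < 1 → HasSum (fun n => c n * z ^ n) (g z)) (k : ℕ) :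
    ∑ j : Fin (k+1), (1 - ‖lamPoint k j‖^2) * ‖g (lamPoint k j)‖^2
      = (1 - (rk k)^2) * (((k+1:ℕ):ℝ) * ∑ d : Fin (k+1), ‖Sd c (rk k) (k+1) (d:ℕ)‖^2) := by
  have hN : 0 < k+1 := Nat.succ_pos k
  have h0 := rk_nonneg k
  have h1 := rk_lt_one k
  have hval : ∀ j : Fin (k+1), g (lamPoint k j)
      = ∑ d : Fin (k+1), zet (k+1) ^ ((j:ℕ) * (d:ℕ)) * Sd c (rk k) (k+1) (d:ℕ) := by
    intro j
    have hlt : ‖lamPoint k j‖ < 1 := by rw [norm_lamPoint' k j]; exact h1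
    have hgs := hg (lamPoint k j) hlt
    have heq : (fun n => c n * (lamPoint k j)^n)
        = fun n => zet (k+1) ^ ((j:ℕ) * n) * (c n * ((rk k : ℝ):ℂ)^n) := by
      funext n
      rw [show lamPoint k j = ((rk k : ℝ):ℂ) * zet (k+1) ^ (j:ℕ) from lamPoint_eq k j,
        mul_pow, ← pow_mul]
      ring
    rw [heq] at hgs
    exact g_rep c hc h0 h1 hN hgs
  calc ∑ j : Fin (k+1), (1 - ‖lamPoint k j‖^2) * ‖g (lamPoint k j)‖^2
      = ∑ j : Fin (k+1), (1 - (rk k)^2) *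
          ‖∑ d : Fin (k+1), zet (k+1) ^ ((j:ℕ)*(d:ℕ)) * Sd c (rk k) (k+1) (d:ℕ)‖^2 := by
        refine Finset.sum_congr rfl fun j _ => ?_
        rw [norm_lamPoint' k j, hval j]
    _ = (1 - (rk k)^2) * ∑ j : Fin (k+1),
          ‖∑ d : Fin (k+1), zet (k+1) ^ ((j:ℕ)*(d:ℕ)) * Sd c (rk k) (k+1) (d:ℕ)‖^2 := by
        rw [Finset.mul_sum]
    _ = (1 - (rk k)^2) * (((k+1:ℕ):ℝ) * ∑ d : Fin (k+1), ‖Sd c (rk k) (k+1) (d:ℕ)‖^2) := by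
        rw [parseval hN _ (zet_orth hN)]

lemma sum_Sd_le (c : ℕ → ℂ) (hc : Summable fun n => ‖c n‖^2) (k : ℕ) :
    ∑ d : Fin (k+1), ‖Sd c (rk k) (k+1) (d:ℕ)‖^2 ≤ 2 * ∑' n, ‖c n‖^2 := by
  have hN : 0 < k+1 := Nat.succ_pos k
  have h0 := rk_nonneg k
  have h1 := rk_lt_one k
  have hqhalf : (rk k)^(k+1) ≤ 1/2 := le_trans (rk_pow_le k) exp_neg_one_le_half
  have hq0 : 0 ≤ (rk k)^(k+1) := pow_nonneg h0 _
  have hinv : (1 - (rk k)^(k+1))⁻¹ ≤ 2 := by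
    rw [inv_le_comm₀ (by linarith) (by norm_num)]
    linarith
  have hper : ∀ d : Fin (k+1),
      ‖Sd c (rk k) (k+1) (d:ℕ)‖^2 ≤ 2 * ∑' t : ℕ, ‖c (t*(k+1)+(d:ℕ))‖^2 := by
    intro d
    have hbd := Sd_norm_sq_le c hc h0 h1 hN (d:ℕ)
    have hle2 : (∑' t : ℕ, ‖c (t*(k+1)+(d:ℕ))‖^2 * ((rk k)^(2*(d:ℕ)) * ((rk k)^(k+1))^t))
        ≤ ∑' t : ℕ, ‖c (t*(k+1)+(d:ℕ))‖^2 := by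
      apply Summable.tsum_le_tsum ?_ (summable_weighted c hc h0 h1 hN (d:ℕ) (d:ℕ))
        (hc.comp_injective (mulN_inj hN (d:ℕ)))
      intro t
      exact mul_le_of_le_one_right (sq_nonneg _)
        (mul_le_one₀ (pow_le_one₀ h0 h1.le) (pow_nonneg hq0 t) (pow_le_one₀ hq0 (hqhalf.trans (by norm_num))))
    calc ‖Sd c (rk k) (k+1) (d:ℕ)‖^2
        ≤ (1 - (rk k)^(k+1))⁻¹ *
          ∑' t : ℕ, ‖c (t*(k+1)+(d:ℕ))‖^2 * ((rk k)^(2*(d:ℕ)) * ((rk k)^(k+1))^t) := hbd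
      _ ≤ 2 * ∑' t : ℕ, ‖c (t*(k+1)+(d:ℕ))‖^2 := by
          apply mul_le_mul hinv hle2 (tsum_nonneg fun t => by positivity) (by norm_num)
  calc ∑ d : Fin (k+1), ‖Sd c (rk k) (k+1) (d:ℕ)‖^2
      ≤ ∑ d : Fin (k+1), 2 * ∑' t : ℕ, ‖c (t*(k+1)+(d:ℕ))‖^2 :=
        Finset.sum_le_sum fun d _ => hper d
    _ = 2 * ∑ d : Fin (k+1), ∑' t : ℕ, ‖c (t*(k+1)+(d:ℕ))‖^2 := by rw [Finset.mul_sum]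
    _ = 2 * ∑' n, ‖c n‖^2 := by rw [← csq_rep c hc hN]

lemma sum_tail_le (c : ℕ → ℂ) (hc : Summable fun n => ‖c n‖^2) (k : ℕ) :
    ∑ d : Fin (k+1), ‖Sd c (rk k) (k+1) ((k+1)+(d:ℕ))‖^2
      ≤ (2 * Real.exp (-1)^2) * ∑' n, ‖c n‖^2 := by
  have hN : 0 < k+1 := Nat.succ_pos k
  have h0 := rk_nonneg k
  have h1 := rk_lt_one k
  set q : ℝ := (rk k)^(k+1) with hqdef
  have hqe : q ≤ Real.exp (-1) := rk_pow_le k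
  have hqhalf : q ≤ 1/2 := le_trans hqe exp_neg_one_le_half
  have hq0 : 0 ≤ q := pow_nonneg h0 _
  have hinv : (1 - q)⁻¹ ≤ 2 := by
    rw [inv_le_comm₀ (by linarith) (by norm_num)]
    linarith
  have hper : ∀ d : Fin (k+1), ‖Sd c (rk k) (k+1) ((k+1)+(d:ℕ))‖^2
      ≤ 2 * (q^2 * ∑' t : ℕ, ‖c (t*(k+1)+(d:ℕ))‖^2) := by
    intro d
    have hbd := Sd_norm_sq_le c hc h0 h1 hN ((k+1)+(d:ℕ))
    have hle2 : (∑' t : ℕ, ‖c (t*(k+1)+((k+1)+(d:ℕ)))‖^2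
          * ((rk k)^(2*((k+1)+(d:ℕ))) * ((rk k)^(k+1))^t))
        ≤ ∑' t : ℕ, q^2 * ‖c (t*(k+1)+((k+1)+(d:ℕ)))‖^2 := by
      apply Summable.tsum_le_tsum ?_ (summable_weighted c hc h0 h1 hN ((k+1)+(d:ℕ)) ((k+1)+(d:ℕ)))
        ((hc.comp_injective (mulN_inj hN ((k+1)+(d:ℕ)))).mul_left _)
      intro t
      rw [mul_comm (q^2)]
      apply mul_le_mul_of_nonneg_left ?_ (sq_nonneg _)
      have hsplit : (rk k)^(2*((k+1)+(d:ℕ))) = q^2 * (rk k)^(2*(d:ℕ)) := by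
        rw [hqdef, ← pow_mul, ← pow_add]
        congr 1
        ring
      rw [hsplit, mul_assoc]
      exact mul_le_of_le_one_right (sq_nonneg q)
        (mul_le_one₀ (pow_le_one₀ h0 h1.le) (pow_nonneg hq0 t)
          (pow_le_one₀ hq0 (hqhalf.trans (by norm_num))))
    have hle3 : (∑' t : ℕ, q^2 * ‖c (t*(k+1)+((k+1)+(d:ℕ)))‖^2)
        ≤ q^2 * ∑' t : ℕ, ‖c (t*(k+1)+(d:ℕ))‖^2 := by
      rw [tsum_mul_left]
      exact mul_le_mul_of_nonneg_left (tail_le c hc hN (d:ℕ)) (sq_nonneg q)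
    calc ‖Sd c (rk k) (k+1) ((k+1)+(d:ℕ))‖^2
        ≤ (1 - q)⁻¹ * (∑' t : ℕ, ‖c (t*(k+1)+((k+1)+(d:ℕ)))‖^2
            * ((rk k)^(2*((k+1)+(d:ℕ))) * ((rk k)^(k+1))^t)) := hbd
      _ ≤ 2 * (q^2 * ∑' t : ℕ, ‖c (t*(k+1)+(d:ℕ))‖^2) := by
          apply mul_le_mul hinv (le_trans hle2 hle3)
            (tsum_nonneg fun t => by positivity) (by norm_num)
  calc ∑ d : Fin (k+1), ‖Sd c (rk k) (k+1) ((k+1)+(d:ℕ))‖^2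
      ≤ ∑ d : Fin (k+1), 2 * (q^2 * ∑' t : ℕ, ‖c (t*(k+1)+(d:ℕ))‖^2) :=
        Finset.sum_le_sum fun d _ => hper d
    _ = 2 * q^2 * ∑ d : Fin (k+1), ∑' t : ℕ, ‖c (t*(k+1)+(d:ℕ))‖^2 := by
        rw [Finset.mul_sum]
        refine Finset.sum_congr rfl fun d _ => by ring
    _ = 2 * q^2 * ∑' n, ‖c n‖^2 := by rw [← csq_rep c hc hN]
    _ ≤ (2 * Real.exp (-1)^2) * ∑' n, ‖c n‖^2 := by
        apply mul_le_mul_of_nonneg_right ?_ (tsum_nonneg fun n => sq_nonneg _)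
        have := pow_le_pow_left₀ hq0 hqe 2
        linarith

/-- Frame inequalities for the normalized Szegő kernels `K̂_{λ_{k,j}}` in the
mixed-norm space `ℓ^∞(ℓ²_k)`: there are `0 < A ≤ B < ∞` with
`A‖g‖ ≤ sup_k (Σ_j |⟨K̂_{λ_{k,j}}, g⟩|²)^{1/2} ≤ B‖g‖` for all `g ∈ H²(𝔻)`,
using `|⟨K̂_λ, g⟩|² = (1 - |λ|²)|g(λ)|²`. -/
theorem normalized_szego_frame_inequalities :
    ∃ A B : ℝ, 0 < A ∧ A ≤ B ∧
      ∀ (c : ℕ → ℂ), Summable (fun n => ‖c n‖ ^ 2) →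
        ∀ g : ℂ → ℂ, (∀ z : ℂ, ‖z‖ < 1 → HasSum (fun n => c n * z ^ n) (g z)) →
          A * Real.sqrt (∑' n, ‖c n‖ ^ 2)
              ≤ (⨆ k : ℕ, Real.sqrt (∑ j : Fin (k + 1),
                  (1 - ‖lamPoint k j‖ ^ 2) * ‖g (lamPoint k j)‖ ^ 2)) ∧
          (⨆ k : ℕ, Real.sqrt (∑ j : Fin (k + 1),
              (1 - ‖lamPoint k j‖ ^ 2) * ‖g (lamPoint k j)‖ ^ 2))
            ≤ B * Real.sqrt (∑' n, ‖c n‖ ^ 2) := by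
  refine ⟨2/5, 2, by norm_num, by norm_num, ?_⟩
  intro c hc g hg
  set Csq := ∑' n, ‖c n‖^2 with hCsqdef
  have hCsq0 : 0 ≤ Csq := tsum_nonneg fun n => sq_nonneg _
  set F : ℕ → ℝ := fun k => Real.sqrt (∑ j : Fin (k + 1),
      (1 - ‖lamPoint k j‖ ^ 2) * ‖g (lamPoint k j)‖ ^ 2) with hFdef
  have hSnn : ∀ k : ℕ, (0:ℝ) ≤ ∑ d : Fin (k+1), ‖Sd c (rk k) (k+1) (d:ℕ)‖^2 :=
    fun k => Finset.sum_nonneg fun d _ => sq_nonneg _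
  have h1N : ∀ k : ℕ, (1 - rk k) * ((k+1:ℕ):ℝ) = 1 := by
    intro k
    have hk : ((k:ℝ)+1) ≠ 0 := by positivity
    rw [rk]
    push_cast
    field_simp
    ring
  have hupper : ∀ k, F k ≤ 2 * Real.sqrt Csq := by
    intro k
    rw [hFdef]
    simp only
    rw [key_identity c hc g hg k]
    have hin : (1 - (rk k)^2) * (((k+1:ℕ):ℝ)
        * ∑ d : Fin (k+1), ‖Sd c (rk k) (k+1) (d:ℕ)‖^2) ≤ 4 * Csq := by
      have heq : (1 - (rk k)^2) * (((k+1:ℕ):ℝ)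
          * ∑ d : Fin (k+1), ‖Sd c (rk k) (k+1) (d:ℕ)‖^2)
          = (1 + rk k) * (((1 - rk k) * ((k+1:ℕ):ℝ))
            * ∑ d : Fin (k+1), ‖Sd c (rk k) (k+1) (d:ℕ)‖^2) := by ring
      rw [heq, h1N k, one_mul]
      have h2 : (1 + rk k) ≤ 2 := by have := rk_lt_one k; linarith
      have h3 := sum_Sd_le c hc k
      have h4 := hSnn k
      nlinarith [rk_nonneg k]
    calc Real.sqrt ((1 - (rk k)^2) * (((k+1:ℕ):ℝ)
          * ∑ d : Fin (k+1), ‖Sd c (rk k) (k+1) (d:ℕ)‖^2))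
        ≤ Real.sqrt (4 * Csq) := Real.sqrt_le_sqrt hin
      _ = 2 * Real.sqrt Csq := by
          rw [show (4:ℝ) * Csq = 2^2 * Csq by norm_num, Real.sqrt_mul (by positivity),
            Real.sqrt_sq (by norm_num)]
  have hbdd : BddAbove (Set.range F) := by
    refine ⟨2 * Real.sqrt Csq, ?_⟩
    rintro x ⟨k, rfl⟩
    exact hupper k
  constructor
  · -- lower bound
    by_cases hC : Csq = 0
    · have h0 : (2/5 : ℝ) * Real.sqrt Csq = 0 := by rw [hC, Real.sqrt_zero, mul_zero]
      rw [h0]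
      exact le_trans (Real.sqrt_nonneg _) (le_ciSup hbdd 0)
    · have hCpos : 0 < Csq := lt_of_le_of_ne hCsq0 (Ne.symm hC)
      have htend := hc.hasSum.tendsto_sum_nat
      have hev : ∀ᶠ M in Filter.atTop,
          (99/100)*Csq < ∑ n ∈ Finset.range M, ‖c n‖^2 :=
        htend.eventually (eventually_gt_nhds (by nlinarith))
      obtain ⟨M, hM⟩ := hev.exists
      have htend2 : Filter.Tendsto (fun k : ℕ => (rk k)^(2*M)) Filter.atTop (nhds 1) := by
        have h3 : Filter.Tendsto (fun k : ℕ => rk k) Filter.atTop (nhds 1) := by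
          have h4 := tendsto_one_div_add_atTop_nhds_zero_nat (𝕜 := ℝ)
          have h5 := (tendsto_const_nhds (α := ℕ) (x := (1:ℝ)) (f := Filter.atTop)).sub h4
          simp only [sub_zero] at h5
          refine h5.congr fun n => ?_
          rw [rk]
        have h6 := h3.pow (2*M)
        simpa using h6
      have hev2 : ∀ᶠ k in Filter.atTop, (99/100 : ℝ) ≤ (rk k)^(2*M) :=
        htend2.eventually (eventually_ge_nhds (by norm_num))
      obtain ⟨k, hk1, hk2⟩ := (hev2.and (Filter.eventually_ge_atTop M)).exists
      -- hk1 : 99/100 ≤ rk k ^ (2*M), hk2 : M ≤ k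
      have hN : 0 < k+1 := Nat.succ_pos k
      have h0 := rk_nonneg k
      have h1 := rk_lt_one k
      set r : ℝ := rk k
      -- (a) F k ≥ sqrt of Σ‖Sd‖²
      have ha : Real.sqrt (∑ d : Fin (k+1), ‖Sd c r (k+1) (d:ℕ)‖^2) ≤ F k := by
        rw [hFdef]
        simp only
        rw [key_identity c hc g hg k]
        apply Real.sqrt_le_sqrt
        have heq : (1 - r^2) * (((k+1:ℕ):ℝ) * ∑ d : Fin (k+1), ‖Sd c r (k+1) (d:ℕ)‖^2)
            = (1 + r) * (((1 - r) * ((k+1:ℕ):ℝ)) * ∑ d : Fin (k+1), ‖Sd c r (k+1) (d:ℕ)‖^2) := by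
          ring
        rw [heq, h1N k, one_mul]
        nlinarith [hSnn k]
      -- (b) Minkowski
      set u : EuclideanSpace ℂ (Fin (k+1)) := WithLp.toLp 2 (fun d => Sd c r (k+1) (d:ℕ)) with hu
      set v : EuclideanSpace ℂ (Fin (k+1)) := WithLp.toLp 2 (fun d => c (d:ℕ) * ((r:ℝ):ℂ)^(d:ℕ)) with hv
      have hnu : ‖u‖ = Real.sqrt (∑ d : Fin (k+1), ‖Sd c r (k+1) (d:ℕ)‖^2) := by
        rw [EuclideanSpace.norm_eq]
      have hnv : ‖v‖ = Real.sqrt (∑ d : Fin (k+1), ‖c (d:ℕ) * ((r:ℝ):ℂ)^(d:ℕ)‖^2) := by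
        rw [EuclideanSpace.norm_eq]
      have hnvu : ‖v - u‖ = Real.sqrt (∑ d : Fin (k+1), ‖Sd c r (k+1) ((k+1)+(d:ℕ))‖^2) := by
        rw [EuclideanSpace.norm_eq]
        congr 1
        refine Finset.sum_congr rfl fun d _ => ?_
        have hsub : (v - u) d = c (d:ℕ) * ((r:ℝ):ℂ)^(d:ℕ) - Sd c r (k+1) (d:ℕ) := rfl
        rw [hsub, Sd_split c hc h0 h1 hN (d:ℕ)]
        rw [show c (d:ℕ) * ((r:ℝ):ℂ)^(d:ℕ) - (c (d:ℕ) * ((r:ℝ):ℂ)^(d:ℕ)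
          + Sd c r (k+1) ((k+1)+(d:ℕ))) = -(Sd c r (k+1) ((k+1)+(d:ℕ))) by ring, norm_neg]
      have hmink : ‖v‖ - ‖v - u‖ ≤ ‖u‖ := by
        have := norm_sub_norm_le v u
        linarith [norm_sub_norm_le v u]
      -- (c) main term lower bound
      have hmain : (99/100 : ℝ) * ((99/100) * Csq)
          ≤ ∑ d : Fin (k+1), ‖c (d:ℕ) * ((r:ℝ):ℂ)^(d:ℕ)‖^2 := by
        have hterm : ∀ d : ℕ, ‖c d * ((r:ℝ):ℂ)^d‖^2 = ‖c d‖^2 * (r^d)^2 := by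
          intro d
          rw [norm_mul, mul_pow, norm_pow, Complex.norm_real, Real.norm_eq_abs,
            _root_.abs_of_nonneg h0]
        calc (99/100 : ℝ) * ((99/100) * Csq)
            ≤ r^(2*M) * ∑ n ∈ Finset.range M, ‖c n‖^2 := by
              have hP0 : (0:ℝ) ≤ ∑ n ∈ Finset.range M, ‖c n‖^2 :=
                Finset.sum_nonneg fun n _ => sq_nonneg _
              apply mul_le_mul hk1 hM.le (by positivity) (by positivity)
          _ ≤ ∑ n ∈ Finset.range M, ‖c n‖^2 * (r^n)^2 := by
              rw [Finset.mul_sum]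
              apply Finset.sum_le_sum
              intro n hn
              have hnM : n < M := Finset.mem_range.mp hn
              have hpow : r^(2*M) ≤ (r^n)^2 := by
                rw [← pow_mul]
                exact pow_le_pow_of_le_one h0 h1.le (by omega)
              nlinarith [sq_nonneg ‖c n‖, sq_nonneg (r^n)]
          _ ≤ ∑ n ∈ Finset.range (k+1), ‖c n‖^2 * (r^n)^2 := by
              apply Finset.sum_le_sum_of_subset_of_nonneg
                (Finset.range_subset_range.mpr (by omega))
              intro n _ _
              positivity
          _ = ∑ d : Fin (k+1), ‖c (d:ℕ) * ((r:ℝ):ℂ)^(d:ℕ)‖^2 := by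
              rw [Fin.sum_univ_eq_sum_range (fun n => ‖c n * ((r:ℝ):ℂ)^n‖^2)]
              exact (Finset.sum_congr rfl fun n _ => (hterm n)).symm
      -- (e) numerics
      have hnum1 : (99/100 : ℝ) * Real.sqrt Csq ≤ ‖v‖ := by
        rw [hnv]
        have : (99/100 : ℝ) * Real.sqrt Csq
            = Real.sqrt ((99/100)*((99/100)*Csq)) := by
          rw [show (99/100 : ℝ)*((99/100)*Csq) = (99/100)^2 * Csq by ring,
            Real.sqrt_mul (by positivity), Real.sqrt_sq (by norm_num)]
        rw [this]
        exact Real.sqrt_le_sqrt hmain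
      have hnum2 : ‖v - u‖ ≤ (53/100 : ℝ) * Real.sqrt Csq := by
        rw [hnvu]
        have hexp : (2 * Real.exp (-1)^2) * Csq ≤ (53/100)^2 * Csq := by
          apply mul_le_mul_of_nonneg_right ?_ hCsq0
          have hE := Real.exp_one_gt_d9
          have hEpos := Real.exp_pos 1
          rw [Real.exp_neg]
          have h7 : (Real.exp 1)⁻¹ ≤ (2.7182818283 : ℝ)⁻¹ := by
            apply inv_anti₀ (by norm_num) hE.le
          have h8 : (0:ℝ) < (Real.exp 1)⁻¹ := by positivity
          nlinarith [h7, h8]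
        calc Real.sqrt (∑ d : Fin (k+1), ‖Sd c r (k+1) ((k+1)+(d:ℕ))‖^2)
            ≤ Real.sqrt ((2 * Real.exp (-1)^2) * Csq) :=
              Real.sqrt_le_sqrt (sum_tail_le c hc k)
          _ ≤ Real.sqrt ((53/100)^2 * Csq) := Real.sqrt_le_sqrt hexp
          _ = (53/100) * Real.sqrt Csq := by
              rw [Real.sqrt_mul (by positivity), Real.sqrt_sq (by norm_num)]
      -- (f) chain
      have hFk : (2/5 : ℝ) * Real.sqrt Csq ≤ F k := by
        have := hmink
        rw [hnu] at this
        calc (2/5 : ℝ) * Real.sqrt Csq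
            ≤ (99/100) * Real.sqrt Csq - (53/100) * Real.sqrt Csq := by
              have := Real.sqrt_nonneg Csq
              nlinarith
          _ ≤ ‖v‖ - ‖v - u‖ := by
              have h9 := hnum1
              have h10 := hnum2
              linarith
          _ ≤ Real.sqrt (∑ d : Fin (k+1), ‖Sd c r (k+1) (d:ℕ)‖^2) := this
          _ ≤ F k := ha
      exact le_trans hFk (le_ciSup hbdd k)
  · exact ciSup_le hupper
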